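/- In the SSLE private game with adversarial power α ∈ (0,1), E[G_n^{SSLE}(α)] = (2α − 1)n; in the PLE private game, E[G_n^{PLE}(α)] = (e^{α−1} − e^{−α})n. Moreover for all α ∈ (0, 1/2), e^{α−1} − e^{−α} > 2α − 1, i.e., the expected gap decreases strictly faster in the SSLE game. -/

import Mathlib

open MeasureTheory ProbabilityTheory

lemma step_integral {Ω : Type*} [MeasureSpace Ω] [IsProbabilityMeasure (ℙ : Measure Ω)]
    (X : Ω → ℤ) (hm : Measurable X) (a b : ℝ) (ha : 0 ≤ a) (hb : 0 ≤ b)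
    (hA : ℙ {ω | X ω = 1} = ENNReal.ofReal a)
    (hB : ℙ {ω | X ω = -1} = ENNReal.ofReal b)
    (hfull : ℙ ({ω | X ω = 1} ∪ {ω | X ω = -1} ∪ {ω | X ω = 0}) = 1) :
    Integrable (fun ω => (X ω : ℝ)) ℙ ∧ ∫ ω, (X ω : ℝ) ∂ℙ = a - b := by
  set A := {ω | X ω = 1} with hAdef
  set B := {ω | X ω = -1} with hBdef
  have hAm : MeasurableSet A := hm (measurableSet_singleton 1)
  have hBm : MeasurableSet B := hm (measurableSet_singleton (-1))
  set f : Ω → ℝ := fun ω => A.indicator (fun _ => (1:ℝ)) ω + B.indicator (fun _ => (-1:ℝ)) ω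
    with hfdef
  have hnull : ℙ (A ∪ B ∪ {ω | X ω = 0})ᶜ = 0 := by
    have hCm : MeasurableSet {ω | X ω = 0} := hm (measurableSet_singleton 0)
    rw [measure_compl ((hAm.union hBm).union hCm) (measure_ne_top _ _), hfull]
    simp
  have hmem : A ∪ B ∪ {ω | X ω = 0} ∈ ae ℙ := mem_ae_iff.mpr hnull
  have h_ae : (fun ω => (X ω : ℝ)) =ᵐ[ℙ] f := by
    filter_upwards [hmem] with ω hω
    rcases hω with (h1 | h1) | h1
    · have hx : X ω = 1 := h1
      simp [hfdef, Set.indicator_apply, hAdef, hBdef, Set.mem_setOf_eq, hx]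
    · have hx : X ω = -1 := h1
      simp [hfdef, Set.indicator_apply, hAdef, hBdef, Set.mem_setOf_eq, hx]
    · have hx : X ω = 0 := h1
      simp [hfdef, Set.indicator_apply, hAdef, hBdef, Set.mem_setOf_eq, hx]
  have hint1 : Integrable (A.indicator (fun _ => (1:ℝ))) ℙ :=
    (integrable_const (1:ℝ)).indicator hAm
  have hint2 : Integrable (B.indicator (fun _ => (-1:ℝ))) ℙ :=
    (integrable_const (-1:ℝ)).indicator hBm
  have hfint : Integrable f ℙ := hint1.add hint2
  have hXint : Integrable (fun ω => (X ω : ℝ)) ℙ := hfint.congr h_ae.symm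
  refine ⟨hXint, ?_⟩
  rw [integral_congr_ae h_ae]
  have : ∫ ω, f ω ∂ℙ = (∫ ω, A.indicator (fun _ => (1:ℝ)) ω ∂ℙ)
      + ∫ ω, B.indicator (fun _ => (-1:ℝ)) ω ∂ℙ := integral_add hint1 hint2
  rw [this, integral_indicator_const _ hAm, integral_indicator_const _ hBm, measureReal_def, measureReal_def, hA, hB,
    ENNReal.toReal_ofReal ha, ENNReal.toReal_ofReal hb]
  simp; ring

lemma walk_integral {Ω : Type*} [MeasureSpace Ω] [IsProbabilityMeasure (ℙ : Measure Ω)]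
    (step : ℕ → Ω → ℤ) (c : ℝ)
    (hstep : ∀ i, Integrable (fun ω => (step i ω : ℝ)) ℙ ∧ ∫ ω, (step i ω : ℝ) ∂ℙ = c)
    (G : ℕ → Ω → ℤ) (hG0 : ∀ ω, G 0 ω = 0)
    (hG : ∀ n ω, G (n+1) ω = G n ω + step n ω) (n : ℕ) :
    ∫ ω, (G n ω : ℝ) ∂ℙ = c * n := by
  suffices h : Integrable (fun ω => (G n ω : ℝ)) ℙ ∧ ∫ ω, (G n ω : ℝ) ∂ℙ = c * n from h.2
  induction n with
  | zero => simp [hG0]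
  | succ n ih =>
    have heq : (fun ω => (G (n+1) ω : ℝ)) = fun ω => (G n ω : ℝ) + (step n ω : ℝ) := by
      funext ω; rw [hG n ω]; push_cast; ring
    constructor
    · rw [heq]; exact ih.1.add (hstep n).1
    · rw [heq, integral_add ih.1 (hstep n).1, ih.2, (hstep n).2]
      push_cast; ring

lemma exp_sum_bound (α : ℝ) (hα : α ∈ Set.Ioo (0:ℝ) 1) :
    Real.exp (α - 1) + Real.exp (-α) ≤ 1 + 2 * Real.exp (-1) := by
  obtain ⟨h0, h1⟩ := hα
  have ha := convexOn_exp.2 (Set.mem_univ (0:ℝ)) (Set.mem_univ (-1:ℝ)) h0.le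
    (by linarith : (0:ℝ) ≤ 1 - α) (by ring)
  have hb := convexOn_exp.2 (Set.mem_univ (-1:ℝ)) (Set.mem_univ (0:ℝ)) h0.le
    (by linarith : (0:ℝ) ≤ 1 - α) (by ring)
  simp only [smul_eq_mul, mul_zero, mul_neg, mul_one, Real.exp_zero, zero_add, add_zero] at ha hb
  have e2 : α - 1 = -(1 - α) := by ring
  rw [e2]
  nlinarith [Real.exp_pos (-1)]

theorem expected_gap_ssle_ple
    {Ω : Type*} [MeasureSpace Ω] [IsProbabilityMeasure (ℙ : Measure Ω)]
    (α : ℝ) (hα : α ∈ Set.Ioo (0:ℝ) 1)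
    -- the SSLE gap: a ±1 random walk with up-probability α
    (stepS : ℕ → Ω → ℤ)
    (hmeasS : ∀ i, Measurable (stepS i))
    (hindepS : iIndepFun stepS ℙ)
    (hupS : ∀ i, ℙ {ω | stepS i ω = 1} = ENNReal.ofReal α)
    (hdownS : ∀ i, ℙ {ω | stepS i ω = -1} = ENNReal.ofReal (1 - α))
    (GS : ℕ → Ω → ℤ) (hGS0 : ∀ ω, GS 0 ω = 0)
    (hGS : ∀ n ω, GS (n+1) ω = GS n ω + stepS n ω)
    -- the PLE gap: a lazy random walk with up-probability pₐ = e^{α-1} - e^{-1}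
    -- and down-probability p_h = e^{-α} - e^{-1}
    (stepP : ℕ → Ω → ℤ)
    (hmeasP : ∀ i, Measurable (stepP i))
    (hindepP : iIndepFun stepP ℙ)
    (hupP : ∀ i, ℙ {ω | stepP i ω = 1} =
      ENNReal.ofReal (Real.exp (α - 1) - Real.exp (-1)))
    (hdownP : ∀ i, ℙ {ω | stepP i ω = -1} =
      ENNReal.ofReal (Real.exp (-α) - Real.exp (-1)))
    (hnullP : ∀ i, ℙ {ω | stepP i ω = 0} =
      ENNReal.ofReal (1 - (Real.exp (α - 1) - Real.exp (-1))
        - (Real.exp (-α) - Real.exp (-1))))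
    (GP : ℕ → Ω → ℤ) (hGP0 : ∀ ω, GP 0 ω = 0)
    (hGP : ∀ n ω, GP (n+1) ω = GP n ω + stepP n ω)
    (n : ℕ) :
    (∫ ω, ((GS n ω : ℝ)) ∂ℙ = (2 * α - 1) * n) ∧
    (∫ ω, ((GP n ω : ℝ)) ∂ℙ = (Real.exp (α - 1) - Real.exp (-α)) * n) ∧
    (α < 1/2 → Real.exp (α - 1) - Real.exp (-α) > 2 * α - 1) := by
  obtain ⟨h0, h1⟩ := hα
  -- SSLE part
  have hstepS : ∀ i, Integrable (fun ω => (stepS i ω : ℝ)) ℙ ∧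
      ∫ ω, (stepS i ω : ℝ) ∂ℙ = α - (1 - α) := by
    intro i
    apply step_integral (stepS i) (hmeasS i) α (1 - α) h0.le (by linarith) (hupS i) (hdownS i)
    have hdisj : Disjoint {ω | stepS i ω = 1} {ω | stepS i ω = -1} :=
      Set.disjoint_left.mpr (fun ω hx hy => by
        simp only [Set.mem_setOf_eq] at hx hy; omega)
    have hBm : MeasurableSet {ω | stepS i ω = -1} := hmeasS i (measurableSet_singleton (-1))
    have hAB : ℙ ({ω | stepS i ω = 1} ∪ {ω | stepS i ω = -1}) = 1 := by
      rw [measure_union hdisj hBm, hupS i, hdownS i,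
        ← ENNReal.ofReal_add h0.le (by linarith)]
      norm_num
    refine le_antisymm prob_le_one ?_
    calc (1 : ENNReal) = _ := hAB.symm
      _ ≤ _ := measure_mono Set.subset_union_left
  have hS : ∫ ω, (GS n ω : ℝ) ∂ℙ = (α - (1 - α)) * n :=
    walk_integral stepS _ hstepS GS hGS0 hGS n
  -- PLE part
  set pa := Real.exp (α - 1) - Real.exp (-1) with hpa
  set ph := Real.exp (-α) - Real.exp (-1) with hph
  have hpa0 : 0 ≤ pa := by
    have : Real.exp (-1) ≤ Real.exp (α - 1) := Real.exp_le_exp.mpr (by linarith)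
    linarith
  have hph0 : 0 ≤ ph := by
    have : Real.exp (-1) ≤ Real.exp (-α) := Real.exp_le_exp.mpr (by linarith)
    linarith
  have hpc0 : 0 ≤ 1 - pa - ph := by
    have := exp_sum_bound α ⟨h0, h1⟩
    simp only [hpa, hph]; linarith
  have hstepP : ∀ i, Integrable (fun ω => (stepP i ω : ℝ)) ℙ ∧
      ∫ ω, (stepP i ω : ℝ) ∂ℙ = pa - ph := by
    intro i
    apply step_integral (stepP i) (hmeasP i) pa ph hpa0 hph0 (hupP i) (hdownP i)
    have hAm : MeasurableSet {ω | stepP i ω = 1} := hmeasP i (measurableSet_singleton 1)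
    have hBm : MeasurableSet {ω | stepP i ω = -1} := hmeasP i (measurableSet_singleton (-1))
    have hCm : MeasurableSet {ω | stepP i ω = 0} := hmeasP i (measurableSet_singleton 0)
    have hd1 : Disjoint {ω | stepP i ω = 1} {ω | stepP i ω = -1} :=
      Set.disjoint_left.mpr (fun ω hx hy => by
        simp only [Set.mem_setOf_eq] at hx hy; omega)
    have hd2 : Disjoint ({ω | stepP i ω = 1} ∪ {ω | stepP i ω = -1}) {ω | stepP i ω = 0} :=
      Set.disjoint_left.mpr (fun ω hx hy => by
        simp only [Set.mem_union, Set.mem_setOf_eq] at hx hy; omega)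
    rw [measure_union hd2 hCm, measure_union hd1 hBm, hupP i, hdownP i, hnullP i,
      ← ENNReal.ofReal_add hpa0 hph0, ← ENNReal.ofReal_add (by linarith) (by linarith : (0:ℝ) ≤ 1 - pa - ph)]
    norm_num
  have hP : ∫ ω, (GP n ω : ℝ) ∂ℙ = (pa - ph) * n :=
    walk_integral stepP _ hstepP GP hGP0 hGP n
  refine ⟨by rw [hS]; ring_nf, by rw [hP]; simp only [hpa, hph]; ring_nf, ?_⟩
  -- the inequality
  intro hhalf
  have hE : Real.exp (α - 1) = Real.exp (-α) * Real.exp (2 * α - 1) := by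
    rw [← Real.exp_add]; ring_nf
  have hlt : 2 * α - 1 < Real.exp (2 * α - 1) - 1 := by
    have := Real.add_one_lt_exp (show 2 * α - 1 ≠ 0 by intro h; linarith)
    linarith
  have hlt1 : Real.exp (2 * α - 1) < 1 := Real.exp_lt_one_iff.mpr (by linarith)
  have hc : Real.exp (-α) < 1 := Real.exp_lt_one_iff.mpr (by linarith)
  have hcp : 0 < Real.exp (-α) := Real.exp_pos _
  nlinarith
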